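/- Let α ∈ (0, π/2) and β ∈ [0, α]. Then for every θ ∈ [1, π/(2α)), |sin(2β)/sin(2α) − sin(2θβ)/sin(2θα)| ≤ 4(θ−1)α / (sin(2α) sin(2θα)). -/
import Mathlib


open Real

lemma prod_to_sum (x y : ℝ) :
    Real.sin x * Real.sin y = (Real.cos (x - y) - Real.cos (x + y)) / 2 := by
  have h := Real.cos_sub_cos (x - y) (x + y)
  rw [show ((x - y) + (x + y)) / 2 = x by ring,
      show ((x - y) - (x + y)) / 2 = -y by ring, Real.sin_neg] at h
  linear_combination -h / 2

lemma cos_lip (x y : ℝ) : |Real.cos x - Real.cos y| ≤ |x - y| := by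
  rw [Real.cos_sub_cos, abs_mul, abs_mul]
  have h1 : |Real.sin ((x + y) / 2)| ≤ 1 := Real.abs_sin_le_one _
  have h2 : |Real.sin ((x - y) / 2)| ≤ |x - y| / 2 := by
    have := Real.abs_sin_le_abs (x := (x - y) / 2)
    rwa [abs_div, abs_two] at this
  have h3 : |(-2 : ℝ)| = 2 := by norm_num
  rw [h3]
  nlinarith [abs_nonneg (Real.sin ((x - y) / 2)), abs_nonneg (Real.sin ((x + y) / 2))]

theorem stmt_17 (α β θ : ℝ) (hα0 : 0 < α) (hα : α < π / 2)
    (hβ0 : 0 ≤ β) (hβ : β ≤ α) (hθ1 : 1 ≤ θ) (hθ : θ < π / (2 * α)) :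
    |Real.sin (2 * β) / Real.sin (2 * α) -
        Real.sin (2 * θ * β) / Real.sin (2 * θ * α)| ≤
      4 * (θ - 1) * α / (Real.sin (2 * α) * Real.sin (2 * θ * α)) := by
  have hθα : 2 * θ * α < π := by
    have h2α : 0 < 2 * α := by linarith
    have := (lt_div_iff₀ h2α).mp hθ
    linarith
  have hs : 0 < Real.sin (2 * α) := Real.sin_pos_of_pos_of_lt_pi (by linarith) (by linarith)
  have ht : 0 < Real.sin (2 * θ * α) :=
    Real.sin_pos_of_pos_of_lt_pi (by nlinarith) hθα
  have key : |Real.sin (2 * β) * Real.sin (2 * θ * α) -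
      Real.sin (2 * α) * Real.sin (2 * θ * β)| ≤ 4 * (θ - 1) * α := by
    have e1 := prod_to_sum (2 * β) (2 * θ * α)
    have e2 := prod_to_sum (2 * θ * β) (2 * α)
    have h1 : |Real.cos (2 * β - 2 * θ * α) - Real.cos (2 * θ * β - 2 * α)| ≤
        2 * (θ - 1) * (α + β) := by
      refine (cos_lip _ _).trans ?_
      rw [show 2 * β - 2 * θ * α - (2 * θ * β - 2 * α) = 2 * ((1 - θ) * (β + α)) by ring,
        abs_le]
      constructor <;> nlinarith
    have h2 : |Real.cos (2 * θ * β + 2 * α) - Real.cos (2 * β + 2 * θ * α)| ≤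
        2 * (θ - 1) * (α - β) := by
      refine (cos_lip _ _).trans ?_
      rw [show 2 * θ * β + 2 * α - (2 * β + 2 * θ * α) = 2 * ((θ - 1) * (β - α)) by ring,
        abs_le]
      constructor <;> nlinarith
    rw [mul_comm (Real.sin (2 * α)), e1, e2, abs_le]
    have b1 := abs_le.mp h1
    have b2 := abs_le.mp h2
    constructor <;> nlinarith [b1.1, b1.2, b2.1, b2.2]
  rw [div_sub_div _ _ hs.ne' ht.ne', abs_div, abs_of_pos (mul_pos hs ht)]
  exact (div_le_div_iff_of_pos_right (mul_pos hs ht)).mpr key
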